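/- Let Γ be a finite connected induced subgraph of the triangular grid with exactly h inner holes. Then there exist m ≤ 3h+1 subsets R_1,…,R_m ⊆ V with R_1 ∪ … ∪ R_m = V such that each R_i induces a connected subgraph of Γ and each R_i has no inner holes (each R_i is a simple region). -/

import Mathlib

open SimpleGraph

/-- The infinite triangular grid graph on `ℤ × ℤ`. -/
def triGrid : SimpleGraph (ℤ × ℤ) where
  Adj u v := u - v = (1, 0) ∨ u - v = (-1, 0) ∨ u - v = (0, 1) ∨ u - v = (0, -1) ∨
    u - v = (1, -1) ∨ u - v = (-1, 1)
  symm := ⟨by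
    intro u v h
    have hvu : v - u = -(u - v) := by ring
    rcases h with h | h | h | h | h | h <;> rw [hvu, h] <;> simp [Prod.ext_iff]⟩
  loopless := ⟨by
    intro u h
    simp [Prod.ext_iff] at h⟩

/-- A finite set is hole-free (simple) if every connected component of the complement
is infinite, i.e., there are no inner holes. -/
def HoleFree (S : Set (ℤ × ℤ)) : Prop :=
  ∀ C : (triGrid.induce Sᶜ).ConnectedComponent, C.supp.Infinite

/-- The graph on `V` whose edges are the edges of the induced grid graph in direction `±e`. -/
def portalLineGraph (V : Set (ℤ × ℤ)) (e : ℤ × ℤ) : SimpleGraph V where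
  Adj u v := triGrid.Adj u v ∧ ((u : ℤ × ℤ) - v = e ∨ (v : ℤ × ℤ) - u = e)
  symm := ⟨fun u v ⟨h, h'⟩ => ⟨h.symm, h'.symm⟩⟩
  loopless := ⟨fun u ⟨h, _⟩ => triGrid.irrefl h⟩

/-- The `e`-portals of the induced subgraph on `V`: connected components of `portalLineGraph`. -/
abbrev Portal (V : Set (ℤ × ℤ)) (e : ℤ × ℤ) := (portalLineGraph V e).ConnectedComponent

/-- The portal containing a given vertex. -/
def portalMk (V : Set (ℤ × ℤ)) (e : ℤ × ℤ) (u : V) : Portal V e :=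
  (portalLineGraph V e).connectedComponentMk u

/-- The `e`-portal graph: vertices are the `e`-portals, two portals being adjacent iff
some edge of the induced grid graph joins them. -/
def portalGraph (V : Set (ℤ × ℤ)) (e : ℤ × ℤ) : SimpleGraph (Portal V e) where
  Adj P Q := P ≠ Q ∧ ∃ u v : V, (triGrid.induce V).Adj u v ∧
    portalMk V e u = P ∧ portalMk V e v = Q
  symm := ⟨fun P Q ⟨hne, u, v, h, hu, hv⟩ => ⟨hne.symm, v, u, h.symm, hv, hu⟩⟩
  loopless := ⟨fun P h => h.1 rfl⟩

/-- Distance between the portals of `u` and `v` in the `e`-portal graph. -/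
noncomputable def portalDist (V : Set (ℤ × ℤ)) (e : ℤ × ℤ) (u v : V) : ℕ :=
  (portalGraph V e).dist (portalMk V e u) (portalMk V e v)

/-- A set `P` is an `e`-portal of the induced subgraph on `V` (as a set of grid points). -/
def IsPortal (V : Set (ℤ × ℤ)) (e : ℤ × ℤ) (P : Set (ℤ × ℤ)) : Prop :=
  ∃ C : Portal V e, P = Subtype.val '' C.supp

/-- `R` is geodesically convex in the subgraph induced on `V`: for all `u, v ∈ R`,
every shortest `u`–`v` path in the induced graph stays inside `R`. -/
def GeodesicallyConvex (V R : Set (ℤ × ℤ)) : Prop :=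
  ∀ u v : V, (u : ℤ × ℤ) ∈ R → (v : ℤ × ℤ) ∈ R →
    ∀ p : (triGrid.induce V).Walk u v, p.length = (triGrid.induce V).dist u v →
      ∀ w ∈ p.support, (w : ℤ × ℤ) ∈ R


namespace TriDecomp

abbrev Pt : Type := ℤ × ℤ

lemma adj_def {u v : Pt} : triGrid.Adj u v ↔ (u - v = (1, 0) ∨ u - v = (-1, 0) ∨ u - v = (0, 1) ∨ u - v = (0, -1) ∨
    u - v = (1, -1) ∨ u - v = (-1, 1)) := Iff.rfl

lemma adj_coords {u v : Pt} : triGrid.Adj u v ↔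
    ((u.1 - v.1 = 1 ∧ u.2 = v.2) ∨ (u.1 - v.1 = -1 ∧ u.2 = v.2) ∨
     (u.1 = v.1 ∧ u.2 - v.2 = 1) ∨ (u.1 = v.1 ∧ u.2 - v.2 = -1) ∨
     (u.1 - v.1 = 1 ∧ u.2 - v.2 = -1) ∨ (u.1 - v.1 = -1 ∧ u.2 - v.2 = 1)) := by
  rw [adj_def]
  simp only [Prod.ext_iff, Prod.fst_sub, Prod.snd_sub]
  constructor <;> intro h <;> omega

lemma adj_up (p : Pt) : triGrid.Adj p (p.1, p.2 + 1) := by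
  rw [adj_coords]; simp

lemma adj_right (p : Pt) : triGrid.Adj p (p.1 + 1, p.2) := by
  rw [adj_coords]; simp

lemma adj_upleft (p : Pt) : triGrid.Adj p (p.1 - 1, p.2 + 1) := by
  rw [adj_coords]; simp

/-- Chains in the grid staying inside a set `A`. -/
inductive Chain (A : Set Pt) : Pt → Pt → Prop
  | refl : ∀ a, a ∈ A → Chain A a a
  | tail : ∀ {a b c}, Chain A a b → triGrid.Adj b c → c ∈ A → Chain A a c

namespace Chain

lemma mem_right {A : Set Pt} {a b : Pt} (h : Chain A a b) : b ∈ A := by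
  cases h with
  | refl ha => exact ha
  | tail _ _ hc => exact hc

lemma mem_left {A : Set Pt} {a b : Pt} (h : Chain A a b) : a ∈ A := by
  induction h with
  | refl ha => exact ha
  | tail _ _ _ ih => exact ih

lemma trans {A : Set Pt} {a b c : Pt} (h1 : Chain A a b) (h2 : Chain A b c) :
    Chain A a c := by
  induction h2 with
  | refl _ => exact h1
  | tail _ hadj hc ih => exact Chain.tail ih hadj hc

lemma head {A : Set Pt} {a b c : Pt} (hadj : triGrid.Adj a b) (ha : a ∈ A)
    (h : Chain A b c) : Chain A a c := by
  induction h with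
  | refl hb => exact Chain.tail (Chain.refl a ha) hadj hb
  | tail _ hadj' hc ih => exact Chain.tail ih hadj' hc

lemma symm {A : Set Pt} {a b : Pt} (h : Chain A a b) : Chain A b a := by
  induction h with
  | refl ha => exact Chain.refl _ ha
  | tail hab hadj hc ih => exact Chain.head hadj.symm hc ih

lemma mono {A B : Set Pt} (hAB : A ⊆ B) {a b : Pt} (h : Chain A a b) :
    Chain B a b := by
  induction h with
  | refl ha => exact Chain.refl _ (hAB ha)
  | tail _ hadj hc ih => exact Chain.tail ih hadj (hAB hc)

lemma single {A : Set Pt} {a b : Pt} (ha : a ∈ A) (hb : b ∈ A)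
    (hadj : triGrid.Adj a b) : Chain A a b :=
  Chain.tail (Chain.refl a ha) hadj hb

end Chain

lemma chain_reachable {A : Set Pt} {a b : Pt} (h : Chain A a b) :
    ∀ (ha : a ∈ A) (hb : b ∈ A), (triGrid.induce A).Reachable ⟨a, ha⟩ ⟨b, hb⟩ := by
  induction h with
  | refl ha => intro _ _; rfl
  | tail hab hadj hc ih =>
      intro ha hb
      exact (ih ha hab.mem_right).trans (SimpleGraph.Adj.reachable (by exact hadj))

lemma reachable_chain {A : Set Pt} {a b : ↥A}
    (h : (triGrid.induce A).Reachable a b) : Chain A a.1 b.1 := by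
  obtain ⟨p⟩ := h
  induction p with
  | nil => exact Chain.refl _ (Subtype.mem _)
  | cons hadj p ih => exact Chain.head (by exact hadj) (Subtype.mem _) ih

/-- Points of the same connected component of `induce A` are chain-connected. -/
lemma comp_chain {A : Set Pt} {C : (triGrid.induce A).ConnectedComponent}
    {a b : ↥A} (ha : a ∈ C.supp) (hb : b ∈ C.supp) : Chain A a.1 b.1 := by
  rw [SimpleGraph.ConnectedComponent.mem_supp_iff] at ha hb
  exact reachable_chain (SimpleGraph.ConnectedComponent.exact (ha.trans hb.symm))

lemma chain_mem_supp {A : Set Pt} {C : (triGrid.induce A).ConnectedComponent}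
    {a : ↥A} (ha : a ∈ C.supp) {b : Pt} (h : Chain A a.1 b) :
    ⟨b, h.mem_right⟩ ∈ C.supp := by
  rw [SimpleGraph.ConnectedComponent.mem_supp_iff] at ha ⊢
  rw [← ha]
  exact SimpleGraph.ConnectedComponent.sound (chain_reachable h a.2 h.mem_right).symm


section Main

variable (V : Set Pt)

/-- The holes of `V`: finite components of the complement. -/
def Holes : Set ((triGrid.induce Vᶜ).ConnectedComponent) := {C | C.supp.Finite}

/-- The underlying point set of a component of the complement. -/
def hset (H : (triGrid.induce Vᶜ).ConnectedComponent) : Set Pt := Subtype.val '' H.supp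

lemma hset_nonempty (H : (triGrid.induce Vᶜ).ConnectedComponent) : (hset V H).Nonempty := by
  obtain ⟨v, hv⟩ := H.exists_rep
  exact ⟨v.1, ⟨v, (SimpleGraph.ConnectedComponent.mem_supp_iff H v).mpr hv, rfl⟩⟩

lemma hset_sub (H : (triGrid.induce Vᶜ).ConnectedComponent) : hset V H ⊆ Vᶜ := by
  rintro p ⟨k, _, rfl⟩; exact k.2

lemma hset_finite {H : (triGrid.induce Vᶜ).ConnectedComponent} (hH : H ∈ Holes V) :
    (hset V H).Finite := hH.image _

lemma hset_chain {H : (triGrid.induce Vᶜ).ConnectedComponent} {a b : Pt}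
    (ha : a ∈ hset V H) (hb : b ∈ hset V H) : Chain Vᶜ a b := by
  obtain ⟨k1, hk1, rfl⟩ := ha
  obtain ⟨k2, hk2, rfl⟩ := hb
  exact comp_chain hk1 hk2

lemma chain_mem_hset {H : (triGrid.induce Vᶜ).ConnectedComponent} {a b : Pt}
    (ha : a ∈ hset V H) (h : Chain Vᶜ a b) : b ∈ hset V H := by
  obtain ⟨k1, hk1, rfl⟩ := ha
  exact ⟨⟨b, h.mem_right⟩, chain_mem_supp hk1 h, rfl⟩

lemma hset_eq_of_mem {H H' : (triGrid.induce Vᶜ).ConnectedComponent} {a : Pt}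
    (ha : a ∈ hset V H) (ha' : a ∈ hset V H') : H = H' := by
  obtain ⟨k1, hk1, rfl⟩ := ha
  obtain ⟨k2, hk2, h12⟩ := ha'
  rw [SimpleGraph.ConnectedComponent.mem_supp_iff] at hk1 hk2
  have : k2 = k1 := Subtype.ext h12
  rw [← hk1, ← hk2, this]

/-- The component of a point of the complement. -/
lemma mem_hset_mk {a : Pt} (ha : a ∈ Vᶜ) :
    a ∈ hset V ((triGrid.induce Vᶜ).connectedComponentMk ⟨a, ha⟩) :=
  ⟨⟨a, ha⟩, by simp [SimpleGraph.ConnectedComponent.mem_supp_iff], rfl⟩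

/-- Key criterion for hole-freeness: every point outside `R` can chain (outside `R`)
to a point lying in an infinite component of `Vᶜ`. -/
lemma holeFree_of_escape {R : Set Pt} (hRV : R ⊆ V)
    (hesc : ∀ q, q ∉ R → ∃ q', Chain Rᶜ q q' ∧
      ∃ K : (triGrid.induce Vᶜ).ConnectedComponent, q' ∈ hset V K ∧ K.supp.Infinite) :
    HoleFree R := by
  intro C
  obtain ⟨q, hq⟩ := C.exists_rep
  have hqsupp : q ∈ C.supp := (SimpleGraph.ConnectedComponent.mem_supp_iff C q).mpr hq
  obtain ⟨q', hchain, K, hq'K, hKinf⟩ := hesc q.1 q.2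
  have hVcRc : Vᶜ ⊆ Rᶜ := Set.compl_subset_compl.mpr hRV
  have hmapmem : ∀ k ∈ K.supp, ∀ (hk : (k : Pt) ∈ Rᶜ), (⟨k.1, hk⟩ : ↥Rᶜ) ∈ C.supp := by
    intro k hk hkR
    obtain ⟨k0, hk0, hk0v⟩ := hq'K
    have c1 : Chain Vᶜ q' k.1 := by
      rw [← hk0v]; exact comp_chain hk0 hk
    have c2 : Chain Rᶜ q.1 k.1 := hchain.trans (c1.mono hVcRc)
    have := chain_mem_supp hqsupp c2
    convert this using 2
  have hinj : Set.InjOn (fun k : ↥Vᶜ => (⟨k.1, fun hR => k.2 (hRV hR)⟩ : ↥Rᶜ)) K.supp := by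
    intro x _ y _ hxy
    have h2 := congrArg Subtype.val hxy
    simp only at h2
    exact Subtype.ext h2
  have himg : ((fun k : ↥Vᶜ => (⟨k.1, fun hR => k.2 (hRV hR)⟩ : ↥Rᶜ)) '' K.supp) ⊆ C.supp := by
    rintro _ ⟨k, hk, rfl⟩
    exact hmapmem k hk _
  exact Set.Infinite.mono himg (Set.Infinite.image hinj hKinf)

/-- lexicographic (y, then x) maximum of a finite nonempty set. -/
lemma exists_maxlex {S : Set Pt} (hf : S.Finite) (hn : S.Nonempty) :
    ∃ r ∈ S, (∀ p ∈ S, p.2 ≤ r.2) ∧ (∀ p ∈ S, p.2 = r.2 → p.1 ≤ r.1) := by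
  classical
  obtain ⟨F, hF⟩ : ∃ F : Finset Pt, ↑F = S := ⟨hf.toFinset, hf.coe_toFinset⟩
  subst hF
  have hFne : F.Nonempty := by exact_mod_cast hn
  set y0 := (F.image Prod.snd).max' (hFne.image _) with hy0
  have hy0mem : y0 ∈ F.image Prod.snd := (F.image Prod.snd).max'_mem _
  set F2 := F.filter (fun p => p.2 = y0) with hF2
  have hF2ne : F2.Nonempty := by
    simp only [Finset.mem_image] at hy0mem
    obtain ⟨p, hp, hpy⟩ := hy0mem
    exact ⟨p, by simp [hF2, hp, hpy]⟩
  set x0 := (F2.image Prod.fst).max' (hF2ne.image _) with hx0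
  have hx0mem : x0 ∈ F2.image Prod.fst := (F2.image Prod.fst).max'_mem _
  simp only [Finset.mem_image, hF2, Finset.mem_filter] at hx0mem
  obtain ⟨p, ⟨hpF, hpy⟩, hpx⟩ := hx0mem
  refine ⟨p, hpF, ?_, ?_⟩
  · intro q hq
    rw [hpy]
    exact (F.image Prod.snd).le_max' _ (Finset.mem_image_of_mem _ hq)
  · intro q hq hqy
    rw [hpx]
    refine (F2.image Prod.fst).le_max' _ (Finset.mem_image_of_mem _ ?_)
    have hq' : q ∈ F := by exact_mod_cast hq
    simp only [hF2, Finset.mem_filter]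
    exact ⟨hq', by omega⟩

lemma exists_ybound (hVfin : V.Finite) : ∃ Y : ℤ, ∀ p ∈ V, p.2 < Y := by
  obtain ⟨b, hb⟩ := (hVfin.image Prod.snd).bddAbove
  exact ⟨b + 1, fun p hp => by
    have := hb (Set.mem_image_of_mem _ hp); omega⟩

end Main


section Construction

variable {V : Set Pt}

open Classical in
/-- The (y,x)-lexicographically maximal point of a hole. -/
noncomputable def rpt (V : Set Pt) (H : (triGrid.induce Vᶜ).ConnectedComponent) : Pt :=
  if hh : (hset V H).Finite then Classical.choose (exists_maxlex hh (hset_nonempty V H))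
  else 0

lemma rpt_spec {H : (triGrid.induce Vᶜ).ConnectedComponent} (hH : H ∈ Holes V) :
    rpt V H ∈ hset V H ∧ (∀ p ∈ hset V H, p.2 ≤ (rpt V H).2) ∧
      (∀ p ∈ hset V H, p.2 = (rpt V H).2 → p.1 ≤ (rpt V H).1) := by
  have hh : (hset V H).Finite := hset_finite V hH
  rw [rpt, dif_pos hh]
  obtain ⟨h1, h2, h3⟩ := Classical.choose_spec (exists_maxlex hh (hset_nonempty V H))
  exact ⟨h1, h2, h3⟩

lemma rpt_mem {H} (hH : H ∈ Holes V) : rpt V H ∈ hset V H := (rpt_spec hH).1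

lemma rpt_vc {H} (hH : H ∈ Holes V) : rpt V H ∈ Vᶜ := hset_sub V H (rpt_mem hH)

lemma rpt_above_mem {H} (hH : H ∈ Holes V) :
    ((rpt V H).1, (rpt V H).2 + 1) ∈ V := by
  by_contra hmem
  have hvc : ((rpt V H).1, (rpt V H).2 + 1) ∈ Vᶜ := hmem
  have hch : Chain Vᶜ (rpt V H) ((rpt V H).1, (rpt V H).2 + 1) :=
    Chain.single (rpt_vc hH) hvc (adj_up _)
  have := (rpt_spec hH).2.1 _ (chain_mem_hset V (rpt_mem hH) hch)
  simp only at this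
  omega

lemma rpt_right_mem {H} (hH : H ∈ Holes V) :
    ((rpt V H).1 + 1, (rpt V H).2) ∈ V := by
  by_contra hmem
  have hvc : ((rpt V H).1 + 1, (rpt V H).2) ∈ Vᶜ := hmem
  have hch : Chain Vᶜ (rpt V H) ((rpt V H).1 + 1, (rpt V H).2) :=
    Chain.single (rpt_vc hH) hvc (adj_right _)
  have hm := chain_mem_hset V (rpt_mem hH) hch
  have := (rpt_spec hH).2.2 _ hm rfl
  simp only at this
  omega

open Classical in
/-- Length of the vertical segment of `V` directly above `rpt V H`. -/
noncomputable def kf (V : Set Pt) (H : (triGrid.induce Vᶜ).ConnectedComponent) : ℕ :=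
  if hex : ∃ k : ℕ, ((rpt V H).1, (rpt V H).2 + 1 + (k : ℤ)) ∉ V then Nat.find hex else 0

lemma kf_ex (hVfin : V.Finite) (H) :
    ∃ k : ℕ, ((rpt V H).1, (rpt V H).2 + 1 + (k : ℤ)) ∉ V := by
  obtain ⟨Y, hY⟩ := exists_ybound V hVfin
  refine ⟨(Y - (rpt V H).2).toNat, fun hmem => ?_⟩
  have := hY _ hmem
  simp only at this
  omega

lemma kf_spec (hVfin : V.Finite) (H) :
    ((rpt V H).1, (rpt V H).2 + 1 + (kf V H : ℤ)) ∉ V := by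
  classical
  rw [kf, dif_pos (kf_ex hVfin H)]
  exact Nat.find_spec (kf_ex hVfin H)

lemma kf_min (hVfin : V.Finite) {H} {j : ℕ} (hj : j < kf V H) :
    ((rpt V H).1, (rpt V H).2 + 1 + (j : ℤ)) ∈ V := by
  classical
  rw [kf, dif_pos (kf_ex hVfin H)] at hj
  by_contra hmem
  exact Nat.find_min (kf_ex hVfin H) hj hmem

lemma kf_pos (hVfin : V.Finite) {H} (hH : H ∈ Holes V) : 1 ≤ kf V H := by
  rcases Nat.eq_zero_or_pos (kf V H) with h0 | h1
  · exfalso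
    have := kf_spec hVfin H
    rw [h0] at this
    simp only [Nat.cast_zero, add_zero] at this
    exact this (rpt_above_mem hH)
  · exact h1

/-- The cut segment above a hole. -/
def seg (V : Set Pt) (H : (triGrid.induce Vᶜ).ConnectedComponent) : Set Pt :=
  {p : Pt | p.1 = (rpt V H).1 ∧ (rpt V H).2 < p.2 ∧ p.2 ≤ (rpt V H).2 + (kf V H : ℤ)}

lemma seg_subV (hVfin : V.Finite) {H} : seg V H ⊆ V := by
  rintro p ⟨h1, h2, h3⟩
  have hj : ((p.2 - (rpt V H).2 - 1).toNat : ℤ) = p.2 - (rpt V H).2 - 1 := by omega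
  have hjlt : (p.2 - (rpt V H).2 - 1).toNat < kf V H := by omega
  have := kf_min hVfin hjlt
  have hpe : ((rpt V H).1, (rpt V H).2 + 1 + ((p.2 - (rpt V H).2 - 1).toNat : ℤ)) = p := by
    rw [hj]
    exact Prod.ext h1.symm (by omega)
  rwa [hpe] at this

lemma seg_bottom_mem (hVfin : V.Finite) {H} (hH : H ∈ Holes V) :
    ((rpt V H).1, (rpt V H).2 + 1) ∈ seg V H := by
  have := kf_pos hVfin hH
  refine ⟨rfl, ?_, ?_⟩
  · show (rpt V H).2 < (rpt V H).2 + 1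
    omega
  · show (rpt V H).2 + 1 ≤ (rpt V H).2 + (kf V H : ℤ)
    omega

/-- The point of the complement just above the cut segment. -/
noncomputable def qtop (V : Set Pt) (H : (triGrid.induce Vᶜ).ConnectedComponent) : Pt :=
  ((rpt V H).1, (rpt V H).2 + 1 + (kf V H : ℤ))

lemma qtop_notV (hVfin : V.Finite) (H) : qtop V H ∉ V := kf_spec hVfin H

lemma qtop_y_gt {H} {p : Pt} (hp : p ∈ seg V H) : p.2 < (qtop V H).2 := by
  obtain ⟨_, _, h3⟩ := hp
  simp only [qtop]
  omega

lemma seg_chain_top {H} :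
    ∀ p ∈ seg V H, Chain (seg V H) p ((rpt V H).1, (rpt V H).2 + (kf V H : ℤ)) := by
  have key : ∀ n : ℕ, ∀ p : Pt, p ∈ seg V H → ((rpt V H).2 + (kf V H : ℤ) - p.2).toNat = n →
      Chain (seg V H) p ((rpt V H).1, (rpt V H).2 + (kf V H : ℤ)) := by
    intro n
    induction n with
    | zero =>
        intro p hp h0
        obtain ⟨h1, h2, h3⟩ := hp
        have hpe : p = ((rpt V H).1, (rpt V H).2 + (kf V H : ℤ)) := Prod.ext h1 (by omega)
        rw [← hpe]
        exact Chain.refl p ⟨h1, h2, h3⟩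
    | succ n ih =>
        intro p hp hn
        obtain ⟨h1, h2, h3⟩ := hp
        have hp' : (p.1, p.2 + 1) ∈ seg V H := by
          refine ⟨h1, ?_, ?_⟩
          · show (rpt V H).2 < p.2 + 1
            omega
          · show p.2 + 1 ≤ (rpt V H).2 + (kf V H : ℤ)
            omega
        exact Chain.head (adj_up p) ⟨h1, h2, h3⟩ (ih _ hp' (by show ((rpt V H).2 + (kf V H : ℤ) - (p.2+1)).toNat = n; omega))
  intro p hp
  exact key _ p hp rfl

lemma seg_chain {H} {p q : Pt} (hp : p ∈ seg V H) (hq : q ∈ seg V H) :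
    Chain (seg V H) p q :=
  (seg_chain_top p hp).trans (seg_chain_top q hq).symm

lemma top_mem_seg (hVfin : V.Finite) {H} (hH : H ∈ Holes V) :
    ((rpt V H).1, (rpt V H).2 + (kf V H : ℤ)) ∈ seg V H := by
  have := kf_pos hVfin hH
  refine ⟨rfl, ?_, ?_⟩
  · show (rpt V H).2 < (rpt V H).2 + (kf V H : ℤ)
    omega
  · show (rpt V H).2 + (kf V H : ℤ) ≤ (rpt V H).2 + (kf V H : ℤ)
    omega

lemma top_adj_qtop {H} :
    triGrid.Adj ((rpt V H).1, (rpt V H).2 + (kf V H : ℤ)) (qtop V H) := by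
  have := adj_up ((rpt V H).1, (rpt V H).2 + (kf V H : ℤ))
  simp only at this
  have he : qtop V H = ((rpt V H).1, (rpt V H).2 + (kf V H : ℤ) + 1) := by
    simp only [qtop]
    exact Prod.ext rfl (by ring)
  rwa [he]

lemma seg_disjoint_aux (hVfin : V.Finite) {H H'} (hH : H ∈ Holes V) (hH' : H' ∈ Holes V)
    {p : Pt} (hp : p ∈ seg V H) (hp' : p ∈ seg V H')
    (hyy : (rpt V H).2 < (rpt V H').2) : False := by
  obtain ⟨h1, h2, h3⟩ := hp
  obtain ⟨h1', h2', h3'⟩ := hp'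
  have hcol : (rpt V H).1 = (rpt V H').1 := by omega
  by_cases hle : (rpt V H').2 ≤ (rpt V H).2 + (kf V H : ℤ)
  · have hj : (((rpt V H').2 - (rpt V H).2 - 1).toNat : ℤ) = (rpt V H').2 - (rpt V H).2 - 1 := by
      omega
    have hjlt : ((rpt V H').2 - (rpt V H).2 - 1).toNat < kf V H := by omega
    have hmem := kf_min hVfin hjlt
    have hpe : ((rpt V H).1, (rpt V H).2 + 1 + (((rpt V H').2 - (rpt V H).2 - 1).toNat : ℤ)) =
        rpt V H' := by
      rw [hj]
      exact Prod.ext hcol (by omega)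
    rw [hpe] at hmem
    exact (rpt_vc hH') hmem
  · omega

lemma seg_disjoint (hVfin : V.Finite) {H H'} (hH : H ∈ Holes V) (hH' : H' ∈ Holes V)
    (hne : H ≠ H') {p : Pt} (hp : p ∈ seg V H) (hp' : p ∈ seg V H') : False := by
  rcases lt_trichotomy (rpt V H).2 (rpt V H').2 with hlt | heq | hgt
  · exact seg_disjoint_aux hVfin hH hH' hp hp' hlt
  · have hcol : (rpt V H).1 = (rpt V H').1 := by
      obtain ⟨h1, _, _⟩ := hp; obtain ⟨h1', _, _⟩ := hp'; omega
    have : rpt V H = rpt V H' := Prod.ext hcol heq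
    exact hne (hset_eq_of_mem V (rpt_mem hH) (by rw [this]; exact rpt_mem hH'))
  · exact seg_disjoint_aux hVfin hH' hH hp' hp hgt

end Construction


section Comps

variable {V : Set Pt}

/-- Union of all cut segments. -/
def segU (V : Set Pt) : Set Pt := ⋃ H ∈ Holes V, seg V H

/-- The rest of `V` after removing the cut segments. -/
def U (V : Set Pt) : Set Pt := V \ segU V

lemma segU_subV (hVfin : V.Finite) : segU V ⊆ V := by
  intro p hp
  simp only [segU, Set.mem_iUnion] at hp
  obtain ⟨H, _, hmem⟩ := hp
  exact seg_subV hVfin hmem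

lemma U_subV : U V ⊆ V := fun _ h => h.1

/-- Chain-connected classes inside `U V`. -/
def Wcl (V : Set Pt) (v : Pt) : Set Pt := {u | Chain (U V) v u}

lemma Wcl_sub {v : Pt} : Wcl V v ⊆ U V := fun _ h => h.mem_right

lemma Wcl_mem {v : Pt} (hv : v ∈ U V) : v ∈ Wcl V v := Chain.refl v hv

lemma Wcl_eq {v u : Pt} (h : Chain (U V) v u) : Wcl V v = Wcl V u := by
  ext w
  exact ⟨fun hw => h.symm.trans hw, fun hw => h.trans hw⟩

lemma chain_in_Wcl {v u : Pt} (h : Chain (U V) v u) : Chain (Wcl V v) v u := by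
  induction h with
  | refl ha => exact Chain.refl _ (Chain.refl _ ha)
  | tail hab hadj hc ih =>
      exact Chain.tail ih hadj ((ih.mono (Wcl_sub)).tail hadj hc)

lemma Wcl_finite (hVfin : V.Finite) (v : Pt) : (Wcl V v).Finite :=
  hVfin.subset (Wcl_sub.trans U_subV)

/-- Exit at the top of a class: the two upper neighbours of the highest point
leave `U V`. -/
lemma wcl_exit (hVfin : V.Finite) {v : Pt} (hv : v ∈ U V) :
    ∃ w : Pt, Chain (Wcl V v) v w ∧ v.2 ≤ w.2 ∧
      (w.1, w.2 + 1) ∉ U V ∧ (w.1 - 1, w.2 + 1) ∉ U V := by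
  obtain ⟨w, hwmem, hwy, _⟩ := exists_maxlex (Wcl_finite hVfin v) ⟨v, Wcl_mem hv⟩
  refine ⟨w, chain_in_Wcl hwmem, hwy v (Wcl_mem hv), ?_, ?_⟩
  · intro hU
    have : (w.1, w.2 + 1) ∈ Wcl V v := Chain.tail hwmem (adj_up w) hU
    have := hwy _ this
    simp only at this
    omega
  · intro hU
    have : (w.1 - 1, w.2 + 1) ∈ Wcl V v := Chain.tail hwmem (adj_upleft w) hU
    have := hwy _ this
    simp only at this
    omega

/-- Splitting a chain in `V` at the first moment it enters `B`. -/
lemma chain_split {B : Set Pt} {v z : Pt} (h : Chain V v z) (hv : v ∈ V \ B) :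
    (Chain (V \ B) v z ∧ z ∉ B) ∨
      ∃ u w, Chain (V \ B) v u ∧ triGrid.Adj u w ∧ w ∈ B ∧ w ∈ V := by
  induction h with
  | refl ha => exact Or.inl ⟨Chain.refl v hv, hv.2⟩
  | tail hab hadj hc ih =>
      rename_i b c
      rcases ih with ⟨hchain, hnb⟩ | hfound
      · by_cases hcB : c ∈ B
        · exact Or.inr ⟨_, _, hchain, hadj, hcB, hc⟩
        · exact Or.inl ⟨Chain.tail hchain hadj ⟨hc, hcB⟩, hcB⟩
      · exact Or.inr hfound

lemma holes_finite (hVfin : V.Finite) : (Holes V).Finite := by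
  have himg : (rpt V '' Holes V) ⊆ (fun p : Pt => (p.1, p.2 - 1)) '' V := by
    rintro _ ⟨H, hH, rfl⟩
    refine ⟨((rpt V H).1, (rpt V H).2 + 1), rpt_above_mem hH, ?_⟩
    simp only
    exact Prod.ext rfl (by ring)
  have hinj : Set.InjOn (rpt V) (Holes V) := by
    intro H hH H' hH' heq
    exact hset_eq_of_mem V (rpt_mem hH) (heq ▸ rpt_mem hH')
  exact Set.Finite.of_finite_image ((hVfin.image _).subset himg) hinj

/-- The special "escape conduit" point to the right of a hole's lex-max point. -/
noncomputable def spt (V : Set Pt) (H : (triGrid.induce Vᶜ).ConnectedComponent) : Pt :=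
  ((rpt V H).1 + 1, (rpt V H).2)

lemma spt_memV {H} (hH : H ∈ Holes V) : spt V H ∈ V := rpt_right_mem hH

/-- Points of classes reserved as escape conduits. -/
def Bad (V : Set Pt) : Set Pt :=
  {u | ∃ H, H ∈ Holes V ∧ spt V H ∈ U V ∧ Chain (U V) (spt V H) u}

lemma Bad_sub : Bad V ⊆ U V := by
  rintro u ⟨H, _, _, hch⟩
  exact hch.mem_right

lemma Bad_closed {u w : Pt} (hu : u ∈ Bad V) (h : Chain (U V) u w) : w ∈ Bad V := by
  obtain ⟨H, hH, hs, hch⟩ := hu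
  exact ⟨H, hH, hs, hch.trans h⟩

/-- Existence of an adjacent segment for every class (given some hole exists). -/
lemma exists_pick_aux (hVfin : V.Finite) (hconn : (triGrid.induce V).Connected)
    {v : Pt} (hv : v ∈ U V) {H₀} (hH₀ : H₀ ∈ Holes V) :
    ∃ H, H ∈ Holes V ∧ ∃ u z, Chain (U V) v u ∧ triGrid.Adj u z ∧ z ∈ seg V H := by
  have hz₀ : ((rpt V H₀).1, (rpt V H₀).2 + 1) ∈ segU V := by
    simp only [segU, Set.mem_iUnion]
    exact ⟨H₀, hH₀, seg_bottom_mem hVfin hH₀⟩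
  have hz₀V : ((rpt V H₀).1, (rpt V H₀).2 + 1) ∈ V := segU_subV hVfin hz₀
  have hchV : Chain V v ((rpt V H₀).1, (rpt V H₀).2 + 1) := by
    have := hconn.preconnected ⟨v, U_subV hv⟩ ⟨_, hz₀V⟩
    exact reachable_chain this
  rcases chain_split hchV hv with ⟨_, hnot⟩ | ⟨u, w, hchain, hadj, hwB, _⟩
  · exact absurd hz₀ hnot
  · simp only [segU, Set.mem_iUnion] at hwB
    obtain ⟨H, hH, hmem⟩ := hwB
    exact ⟨H, hH, u, w, hchain, hadj, hmem⟩

open Classical in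
/-- lex-max of a set (canonical representative machinery). -/
noncomputable def reppSet (S : Set Pt) : Pt :=
  if hh : S.Finite ∧ S.Nonempty then Classical.choose (exists_maxlex hh.1 hh.2) else 0

/-- Canonical representative of a class. -/
noncomputable def repp (V : Set Pt) (v : Pt) : Pt := reppSet (Wcl V v)

lemma repp_mem (hVfin : V.Finite) {v : Pt} (hv : v ∈ U V) : repp V v ∈ Wcl V v := by
  classical
  have hh : (Wcl V v).Finite ∧ (Wcl V v).Nonempty := ⟨Wcl_finite hVfin v, ⟨v, Wcl_mem hv⟩⟩
  rw [repp, reppSet, dif_pos hh]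
  exact (Classical.choose_spec (exists_maxlex hh.1 hh.2)).1

lemma repp_congr {v u : Pt} (h : Wcl V v = Wcl V u) : repp V v = repp V u :=
  congrArg reppSet h

open Classical in
/-- The assigned segment marker: `rpt V H` for a hole `H` whose segment is adjacent to
the class of the given representative point. -/
noncomputable def pickAux (V : Set Pt) (w : Pt) : Pt :=
  if hex : ∃ H, H ∈ Holes V ∧ ∃ u z, Chain (U V) w u ∧ triGrid.Adj u z ∧ z ∈ seg V H
  then rpt V hex.choose else 0

noncomputable def pickP (V : Set Pt) (v : Pt) : Pt := pickAux V (repp V v)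

lemma pickP_spec {v : Pt}
    (hex : ∃ H, H ∈ Holes V ∧ ∃ u z, Chain (U V) (repp V v) u ∧ triGrid.Adj u z ∧ z ∈ seg V H) :
    ∃ H, H ∈ Holes V ∧ pickP V v = rpt V H ∧
      ∃ u z, Chain (U V) (repp V v) u ∧ triGrid.Adj u z ∧ z ∈ seg V H := by
  classical
  obtain ⟨hH, hrest⟩ := hex.choose_spec
  exact ⟨hex.choose, hH, by rw [pickP, pickAux, dif_pos hex], hrest⟩

lemma pickP_congr {v u : Pt} (h : Wcl V v = Wcl V u) : pickP V v = pickP V u :=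
  congrArg (pickAux V) (repp_congr h)

end Comps


section Escape

variable {V R : Set Pt} {H₀ : (triGrid.induce Vᶜ).ConnectedComponent}

/-- Escape: chain outside `R` to a point of an infinite component of `Vᶜ`. -/
def Esc (V R : Set Pt) (q : Pt) : Prop :=
  ∃ q', Chain Rᶜ q q' ∧
    ∃ K : (triGrid.induce Vᶜ).ConnectedComponent, q' ∈ hset V K ∧ K.supp.Infinite

lemma Esc.prepend {q q' : Pt} (h : Chain Rᶜ q q') (he : Esc V R q') : Esc V R q := by
  obtain ⟨q'', c, K, hK1, hK2⟩ := he
  exact ⟨q'', h.trans c, K, hK1, hK2⟩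

/-- Hypotheses guaranteeing that a region `R` does not enclose anything. -/
structure EscHyp (V R : Set Pt) (H₀ : (triGrid.induce Vᶜ).ConnectedComponent) : Prop where
  hH₀ : H₀ ∈ Holes V
  sub : R ⊆ V
  e2 : ∀ H, H ∈ Holes V → H ≠ H₀ → ∀ p ∈ seg V H, p ∉ R
  e3 : seg V H₀ ⊆ R ∨ ∀ p ∈ seg V H₀, p ∉ R
  e4 : seg V H₀ ⊆ R → spt V H₀ ∉ R ∧ (spt V H₀ ∈ U V → ∀ p ∈ Wcl V (spt V H₀), p ∉ R)
  e5 : R ⊆ seg V H₀ ∪ U V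
  e6 : ∀ v, v ∈ U V → v ∉ R → ∀ p ∈ Wcl V v, p ∉ R

lemma vc_sub_rc (hE : EscHyp V R H₀) : Vᶜ ⊆ Rᶜ := Set.compl_subset_compl.mpr hE.sub

lemma seg_climb_chain (hVfin : V.Finite) (hE : EscHyp V R H₀) {H}
    (hfree : ∀ p ∈ seg V H, p ∉ R) : ∀ p ∈ seg V H, Chain Rᶜ p (qtop V H) := by
  intro p hp
  have hsub : seg V H ⊆ Rᶜ := fun x hx => hfree x hx
  refine ((seg_chain_top p hp).mono hsub).tail top_adj_qtop ?_
  exact fun hR => qtop_notV hVfin H (hE.sub hR)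

lemma mem_segU_of (hVfin : V.Finite) {p : Pt} (hp : p ∈ V) (hpu : p ∉ U V) :
    ∃ H, H ∈ Holes V ∧ p ∈ seg V H := by
  have : p ∈ segU V := by
    by_contra hns
    exact hpu ⟨hp, hns⟩
  simp only [segU, Set.mem_iUnion] at this
  obtain ⟨H, hH, hm⟩ := this
  exact ⟨H, hH, hm⟩

/-- Main escape lemma for holes, by induction on the height of the lex-max point. -/
lemma hole_escape (hVfin : V.Finite) (hE : EscHyp V R H₀) {Y : ℤ}
    (hY : ∀ p ∈ V, p.2 < Y) :
    ∀ n : ℕ, ∀ H, H ∈ Holes V → (Y - (rpt V H).2).toNat ≤ n →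
      ∀ q ∈ hset V H, Esc V R q := by
  intro n
  induction n with
  | zero =>
      intro H hH hm q hq
      exfalso
      have := hY _ (rpt_above_mem hH)
      simp only at this
      omega
  | succ n ih =>
      intro H hH hm q hq
      have hrY : (rpt V H).2 + 1 < Y := by
        have := hY _ (rpt_above_mem hH)
        simpa only using this
      have step : ∀ q' : Pt, q' ∉ V → (rpt V H).2 < q'.2 → Chain Rᶜ q q' → Esc V R q := by
        intro q' hq' hygt hchain
        by_cases hfin : ((triGrid.induce Vᶜ).connectedComponentMk ⟨q', hq'⟩).supp.Finite
        · have hK : ((triGrid.induce Vᶜ).connectedComponentMk ⟨q', hq'⟩) ∈ Holes V := hfin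
          have hq'mem := mem_hset_mk V (a := q') hq'
          have hy2 : q'.2 ≤ (rpt V ((triGrid.induce Vᶜ).connectedComponentMk ⟨q', hq'⟩)).2 :=
            (rpt_spec hK).2.1 _ hq'mem
          have hKY : (rpt V ((triGrid.induce Vᶜ).connectedComponentMk ⟨q', hq'⟩)).2 + 1 < Y := by
            have := hY _ (rpt_above_mem hK)
            simpa only using this
          have hmea : (Y - (rpt V ((triGrid.induce Vᶜ).connectedComponentMk ⟨q', hq'⟩)).2).toNat ≤ n := by
            omega
          exact Esc.prepend hchain (ih _ hK hmea q' hq'mem)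
        · exact ⟨q', hchain, _, mem_hset_mk V hq', hfin⟩
      have c0 : Chain Rᶜ q (rpt V H) :=
        (hset_chain V hq (rpt_mem hH)).mono (vc_sub_rc hE)
      by_cases hfree : ∀ p ∈ seg V H, p ∉ R
      · have hbot := seg_bottom_mem hVfin hH
        have c1 : Chain Rᶜ q ((rpt V H).1, (rpt V H).2 + 1) :=
          c0.tail (adj_up _) (hfree _ hbot)
        have c2 := seg_climb_chain hVfin hE hfree _ hbot
        refine step (qtop V H) (qtop_notV hVfin H) ?_ (c1.trans c2)
        show (rpt V H).2 < (rpt V H).2 + 1 + (kf V H : ℤ)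
        omega
      · push_neg at hfree
        obtain ⟨p0, hp0seg, hp0R⟩ := hfree
        have hHeq : H = H₀ := by
          by_contra hne
          exact hE.e2 H hH hne p0 hp0seg hp0R
        subst hHeq
        have hsegR : seg V H ⊆ R := by
          rcases hE.e3 with hl | hr
          · exact hl
          · exact absurd hp0R (hr p0 hp0seg)
        obtain ⟨hsptR, hsptW⟩ := hE.e4 hsegR
        have cs : Chain Rᶜ q (spt V H) := c0.tail (adj_right _) hsptR
        by_cases hsU : spt V H ∈ U V
        · have hfreeW := hsptW hsU
          obtain ⟨w, chainW, hsy, he1, he2⟩ := wcl_exit hVfin hsU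
          have hWsub : Wcl V (spt V H) ⊆ Rᶜ := fun x hx => hfreeW x hx
          have cw : Chain Rᶜ q w := cs.trans (chainW.mono hWsub)
          obtain ⟨e, he_adj, he_nseg, he_nU, he_y⟩ :
              ∃ e : Pt, triGrid.Adj w e ∧ e ∉ seg V H ∧ e ∉ U V ∧ e.2 = w.2 + 1 := by
            by_cases h1 : (w.1, w.2 + 1) ∈ seg V H
            · refine ⟨(w.1 - 1, w.2 + 1), adj_upleft w, ?_, he2, rfl⟩
              intro h2
              obtain ⟨c1', _, _⟩ := h1
              obtain ⟨c2', _, _⟩ := h2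
              simp only at c1' c2'
              omega
            · exact ⟨(w.1, w.2 + 1), adj_up w, h1, he1, rfl⟩
          have heR : e ∉ R := by
            intro hR
            rcases hE.e5 hR with h | h
            · exact he_nseg h
            · exact he_nU h
          have ce : Chain Rᶜ q e := cw.tail he_adj heR
          have hey : (rpt V H).2 < e.2 := by
            have : (spt V H).2 = (rpt V H).2 := rfl
            omega
          by_cases heV : e ∈ V
          · obtain ⟨H₃, hH₃, hmem₃⟩ := mem_segU_of hVfin heV he_nU
            have hne₃ : H₃ ≠ H := fun he => he_nseg (he ▸ hmem₃)
            have hfree₃ := hE.e2 H₃ hH₃ hne₃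
            have c3 := seg_climb_chain hVfin hE hfree₃ e hmem₃
            exact step (qtop V H₃) (qtop_notV hVfin H₃)
              (lt_trans hey (qtop_y_gt hmem₃)) (ce.trans c3)
          · exact step e heV hey ce
        · have hsV : spt V H ∈ V := spt_memV hE.hH₀
          obtain ⟨H₂, hH₂, hmem₂⟩ := mem_segU_of hVfin hsV hsU
          have hne₂ : H₂ ≠ H := by
            intro he
            obtain ⟨c1', _, _⟩ := hmem₂
            rw [he] at c1'
            have : (spt V H).1 = (rpt V H).1 + 1 := rfl
            omega
          have hfree₂ := hE.e2 _ hH₂ hne₂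
          have c2 := seg_climb_chain hVfin hE hfree₂ _ hmem₂
          have : (rpt V H).2 < (qtop V H₂).2 := by
            have h1 := qtop_y_gt hmem₂
            have : (spt V H).2 = (rpt V H).2 := rfl
            omega
          exact step (qtop V H₂) (qtop_notV hVfin H₂) this (cs.trans c2)

/-- Total escape from complement points. -/
lemma esc_vc (hVfin : V.Finite) (hE : EscHyp V R H₀) :
    ∀ q', q' ∉ V → Esc V R q' := by
  intro q' hq'
  obtain ⟨Y, hY⟩ := exists_ybound V hVfin
  by_cases hfin : ((triGrid.induce Vᶜ).connectedComponentMk ⟨q', hq'⟩).supp.Finite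
  · exact hole_escape hVfin hE hY _ _ hfin le_rfl _ (mem_hset_mk V hq')
  · exact ⟨q', Chain.refl q' (vc_sub_rc hE hq'), _, mem_hset_mk V hq', hfin⟩

/-- Escape from a free class of `U V`. -/
lemma class_exit_esc (hVfin : V.Finite) (hE : EscHyp V R H₀) {v : Pt}
    (hv : v ∈ U V) (hfree : ∀ p ∈ Wcl V v, p ∉ R) : Esc V R v := by
  obtain ⟨w, chainW, _, he1, he2⟩ := wcl_exit hVfin hv
  have hWsub : Wcl V v ⊆ Rᶜ := fun x hx => hfree x hx
  have cw : Chain Rᶜ v w := chainW.mono hWsub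
  obtain ⟨e, he_adj, he_nR, he_nU⟩ :
      ∃ e : Pt, triGrid.Adj w e ∧ e ∉ R ∧ e ∉ U V := by
    rcases hE.e3 with hsegR | hfree0
    · by_cases h1 : (w.1, w.2 + 1) ∈ seg V H₀
      · refine ⟨(w.1 - 1, w.2 + 1), adj_upleft w, ?_, he2⟩
        intro hR
        rcases hE.e5 hR with h | h
        · obtain ⟨c1', _, _⟩ := h1
          obtain ⟨c2', _, _⟩ := h
          simp only at c1' c2'
          omega
        · exact he2 h
      · refine ⟨(w.1, w.2 + 1), adj_up w, ?_, he1⟩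
        intro hR
        rcases hE.e5 hR with h | h
        · exact h1 h
        · exact he1 h
    · refine ⟨(w.1, w.2 + 1), adj_up w, ?_, he1⟩
      intro hR
      rcases hE.e5 hR with h | h
      · exact hfree0 _ h hR
      · exact he1 h
  have ce : Chain Rᶜ v e := cw.tail he_adj he_nR
  by_cases heV : e ∈ V
  · obtain ⟨H₃, hH₃, hmem₃⟩ := mem_segU_of hVfin heV he_nU
    have hfree₃ : ∀ p ∈ seg V H₃, p ∉ R := by
      by_cases hne₃ : H₃ = H₀
      · subst hne₃
        rcases hE.e3 with hsegR | hfree0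
        · exact absurd (hsegR hmem₃) he_nR
        · exact hfree0
      · exact hE.e2 _ hH₃ hne₃
    have c3 := seg_climb_chain hVfin hE hfree₃ e hmem₃
    exact Esc.prepend (ce.trans c3) (esc_vc hVfin hE _ (qtop_notV hVfin H₃))
  · exact Esc.prepend ce (esc_vc hVfin hE _ heV)

/-- Global escape: every point outside the region escapes. -/
lemma escape_all (hVfin : V.Finite) (hE : EscHyp V R H₀) :
    ∀ q, q ∉ R → Esc V R q := by
  intro q hqR
  by_cases hqV : q ∈ V
  · by_cases hqU : q ∈ U V
    · exact class_exit_esc hVfin hE hqU (hE.e6 q hqU hqR)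
    · obtain ⟨H', hH', hmem'⟩ := mem_segU_of hVfin hqV hqU
      have hfree' : ∀ p ∈ seg V H', p ∉ R := by
        by_cases hne' : H' = H₀
        · subst hne'
          rcases hE.e3 with hsegR | hfree0
          · exact absurd (hsegR hmem') hqR
          · exact hfree0
        · exact hE.e2 _ hH' hne'
      have c3 := seg_climb_chain hVfin hE hfree' q hmem'
      exact Esc.prepend c3 (esc_vc hVfin hE _ (qtop_notV hVfin H'))
  · exact esc_vc hVfin hE q hqV

/-- Regions satisfying the escape hypotheses are hole-free. -/
lemma holeFree_of_eschyp (hVfin : V.Finite) (hE : EscHyp V R H₀) : HoleFree R := by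
  refine holeFree_of_escape V hE.sub ?_
  intro q hq
  exact escape_all hVfin hE q hq

end Escape


section Regions

variable {V : Set Pt} {H : (triGrid.induce Vᶜ).ConnectedComponent}

/-- Primary region for a hole: its cut segment together with the assigned classes. -/
noncomputable def R1 (V : Set Pt) (H : (triGrid.induce Vᶜ).ConnectedComponent) : Set Pt :=
  seg V H ∪ {v | v ∈ U V ∧ v ∉ Bad V ∧ pickP V v = rpt V H}

open Classical in
/-- Secondary region for a hole: the reserved conduit class (if any). -/
noncomputable def R2 (V : Set Pt) (H : (triGrid.induce Vᶜ).ConnectedComponent) : Set Pt :=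
  if spt V H ∈ U V then Wcl V (spt V H) else R1 V H

lemma seg_mem_segU (hH : H ∈ Holes V) {p : Pt} (hp : p ∈ seg V H) : p ∈ segU V := by
  simp only [segU, Set.mem_iUnion]
  exact ⟨H, hH, hp⟩

lemma U_seg_disj (hH : H ∈ Holes V) {p : Pt} (hp : p ∈ U V) (hs : p ∈ seg V H) : False :=
  hp.2 (seg_mem_segU hH hs)

lemma R1_subV (hVfin : V.Finite) : R1 V H ⊆ V := by
  rintro p (hp | hp)
  · exact seg_subV hVfin hp
  · exact U_subV hp.1

lemma spt_mem_Bad (hH : H ∈ Holes V) (hsU : spt V H ∈ U V) : spt V H ∈ Bad V :=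
  ⟨H, hH, hsU, Chain.refl _ hsU⟩

lemma Wcl_spt_sub_Bad (hH : H ∈ Holes V) (hsU : spt V H ∈ U V) :
    Wcl V (spt V H) ⊆ Bad V := fun p hp => ⟨H, hH, hsU, hp⟩

lemma spt_col : (spt V H).1 = (rpt V H).1 + 1 := rfl

lemma spt_not_seg : spt V H ∉ seg V H := by
  rintro ⟨h1, _, _⟩
  have : (spt V H).1 = (rpt V H).1 + 1 := rfl
  omega

lemma spt_not_R1 (hH : H ∈ Holes V) : spt V H ∉ R1 V H := by
  rintro (hp | ⟨hU, hnb, _⟩)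
  · exact spt_not_seg hp
  · exact hnb (spt_mem_Bad hH hU)

lemma Wcl_sub_R1 {v : Pt} (hv : v ∈ U V) (hnb : v ∉ Bad V)
    (hpk : pickP V v = rpt V H) : Wcl V v ⊆ R1 V H := by
  intro p hp
  have hchain : Chain (U V) v p := hp
  refine Or.inr ⟨hchain.mem_right, ?_, ?_⟩
  · intro hpB
    exact hnb (Bad_closed hpB hchain.symm)
  · rw [← pickP_congr (Wcl_eq hchain)]
    exact hpk

lemma R1_eschyp (hVfin : V.Finite) (hH : H ∈ Holes V) : EscHyp V (R1 V H) H := by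
  refine ⟨hH, R1_subV hVfin, ?_, Or.inl Set.subset_union_left, ?_, ?_, ?_⟩
  · -- e2
    intro H' hH' hne p hp hpR
    rcases hpR with hseg | hU
    · exact seg_disjoint hVfin hH' hH hne hp hseg
    · exact U_seg_disj hH' hU.1 hp
  · -- e4
    intro _
    refine ⟨spt_not_R1 hH, ?_⟩
    intro hsU p hp hpR
    have hpBad : p ∈ Bad V := Wcl_spt_sub_Bad hH hsU hp
    rcases hpR with hseg | hU
    · exact U_seg_disj hH (Wcl_sub hp) hseg
    · exact hU.2.1 hpBad
  · -- e5
    rintro p (hp | hp)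
    · exact Or.inl hp
    · exact Or.inr hp.1
  · -- e6
    intro v hv hvR p hp hpR
    have hchain : Chain (U V) v p := hp
    rcases hpR with hseg | ⟨hpU, hpnb, hppk⟩
    · exact U_seg_disj hH hchain.mem_right hseg
    · refine hvR (Or.inr ⟨hv, ?_, ?_⟩)
      · intro hvB
        exact hpnb (Bad_closed hvB hchain)
      · rw [pickP_congr (Wcl_eq hchain)]
        exact hppk

lemma connected_of_chains {S : Set Pt} (hne : S.Nonempty)
    (h : ∀ a ∈ S, ∀ b ∈ S, Chain S a b) : (triGrid.induce S).Connected := by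
  rw [SimpleGraph.connected_iff]
  refine ⟨?_, ⟨⟨hne.choose, hne.choose_spec⟩⟩⟩
  intro a b
  exact chain_reachable (h a.1 a.2 b.1 b.2) a.2 b.2

lemma R1_chain_to_bottom (hVfin : V.Finite) (hconn : (triGrid.induce V).Connected)
    (hH : H ∈ Holes V) :
    ∀ a ∈ R1 V H, Chain (R1 V H) a ((rpt V H).1, (rpt V H).2 + 1) := by
  have hbot := seg_bottom_mem hVfin hH
  have hsegsub : seg V H ⊆ R1 V H := Set.subset_union_left
  intro a ha
  rcases ha with haseg | ⟨hv, hnb, hpk⟩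
  · exact (seg_chain haseg hbot).mono hsegsub
  · have hWsub : Wcl V a ⊆ R1 V H := Wcl_sub_R1 hv hnb hpk
    have hrepp : repp V a ∈ Wcl V a := repp_mem hVfin hv
    have hreppU : repp V a ∈ U V := Wcl_sub hrepp
    have hex : ∃ H', H' ∈ Holes V ∧ ∃ u z, Chain (U V) (repp V a) u ∧
        triGrid.Adj u z ∧ z ∈ seg V H' :=
      exists_pick_aux hVfin hconn hreppU hH
    obtain ⟨H', hH', hpk', u, z, hchain_u, hadj, hz⟩ := pickP_spec hex
    have hHH' : H' = H := by
      apply hset_eq_of_mem V (rpt_mem hH') (_ : rpt V H' ∈ hset V H)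
      rw [← hpk', hpk]
      exact rpt_mem hH
    rw [hHH'] at hz
    have hchain_au : Chain (U V) a u := (hrepp : Chain (U V) a (repp V a)).trans hchain_u
    have c1 : Chain (R1 V H) a u := (chain_in_Wcl hchain_au).mono hWsub
    have c2 : Chain (R1 V H) a z := c1.tail hadj (hsegsub hz)
    exact c2.trans ((seg_chain hz hbot).mono hsegsub)

lemma R1_conn (hVfin : V.Finite) (hconn : (triGrid.induce V).Connected)
    (hH : H ∈ Holes V) : (triGrid.induce (R1 V H)).Connected := by
  refine connected_of_chains ⟨_, Set.subset_union_left (seg_bottom_mem hVfin hH)⟩ ?_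
  intro a ha b hb
  exact (R1_chain_to_bottom hVfin hconn hH a ha).trans
    (R1_chain_to_bottom hVfin hconn hH b hb).symm

lemma Wcl_spt_eschyp (hVfin : V.Finite) (hH : H ∈ Holes V) (hsU : spt V H ∈ U V) :
    EscHyp V (Wcl V (spt V H)) H := by
  have hWU : Wcl V (spt V H) ⊆ U V := Wcl_sub
  refine ⟨hH, hWU.trans U_subV, ?_, Or.inr ?_, ?_, ?_, ?_⟩
  · intro H' hH' _ p hp hpR
    exact U_seg_disj hH' (hWU hpR) hp
  · intro p hp hpR
    exact U_seg_disj hH (hWU hpR) hp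
  · intro hsub
    exfalso
    exact U_seg_disj hH (hWU (hsub (seg_bottom_mem hVfin hH))) (seg_bottom_mem hVfin hH)
  · exact hWU.trans Set.subset_union_right
  · intro v hv hvR p hp hpR
    have h1 : Chain (U V) v p := hp
    have h2 : Chain (U V) (spt V H) p := hpR
    exact hvR (h2.trans h1.symm)

lemma Wcl_conn {v : Pt} (hv : v ∈ U V) : (triGrid.induce (Wcl V v)).Connected := by
  refine connected_of_chains ⟨v, Wcl_mem hv⟩ ?_
  intro a ha b hb
  have hab : Chain (U V) a b := (ha : Chain (U V) v a).symm.trans hb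
  have := chain_in_Wcl hab
  rwa [← Wcl_eq (ha : Chain (U V) v a)] at this

lemma R2_subV (hVfin : V.Finite) : R2 V H ⊆ V := by
  by_cases hsU : spt V H ∈ U V
  · rw [R2, if_pos hsU]
    exact Wcl_sub.trans U_subV
  · rw [R2, if_neg hsU]
    exact R1_subV hVfin

lemma R2_conn (hVfin : V.Finite) (hconn : (triGrid.induce V).Connected)
    (hH : H ∈ Holes V) : (triGrid.induce (R2 V H)).Connected := by
  by_cases hsU : spt V H ∈ U V
  · rw [R2, if_pos hsU]
    exact Wcl_conn hsU
  · rw [R2, if_neg hsU]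
    exact R1_conn hVfin hconn hH

lemma R2_holeFree (hVfin : V.Finite) (hH : H ∈ Holes V) : HoleFree (R2 V H) := by
  by_cases hsU : spt V H ∈ U V
  · rw [R2, if_pos hsU]
    exact holeFree_of_eschyp hVfin (Wcl_spt_eschyp hVfin hH hsU)
  · rw [R2, if_neg hsU]
    exact holeFree_of_eschyp hVfin (R1_eschyp hVfin hH)

lemma R1_holeFree (hVfin : V.Finite) (hH : H ∈ Holes V) : HoleFree (R1 V H) :=
  holeFree_of_eschyp hVfin (R1_eschyp hVfin hH)

end Regions

end TriDecomp

open TriDecomp in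
/-- A finite connected induced subgraph of the triangular grid with exactly
`h` inner holes can be decomposed into at most `3h + 1` simple connected regions. -/
theorem decomposition_into_simple_regions (V : Set (ℤ × ℤ)) (hfin : V.Finite)
    (hne : V.Nonempty) (hconn : (triGrid.induce V).Connected) (h : ℕ)
    (hholes : {C : (triGrid.induce Vᶜ).ConnectedComponent | C.supp.Finite}.ncard = h) :
    ∃ m : ℕ, m ≤ 3 * h + 1 ∧ ∃ R : Fin m → Set (ℤ × ℤ),
      (∀ i, R i ⊆ V) ∧ (⋃ i, R i) = V ∧
      ∀ i, (triGrid.induce (R i)).Connected ∧ HoleFree (R i) := by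
  classical
  rcases Nat.eq_zero_or_pos h with h0 | hpos
  · subst h0
    refine ⟨1, by omega, fun _ => V, fun _ => subset_rfl, by rw [Set.iUnion_const], ?_⟩
    intro _
    refine ⟨hconn, ?_⟩
    intro C
    by_contra hC
    rw [Set.not_infinite] at hC
    have hmem : C ∈ Holes V := hC
    have hz : (Holes V).ncard = 0 := hholes
    rw [Set.ncard_eq_zero (holes_finite hfin)] at hz
    rw [hz] at hmem
    exact hmem
  · have HF : (Holes V).Finite := holes_finite hfin
    have hncard : (Holes V).ncard = h := hholes
    have hne' : (Holes V).Nonempty := by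
      rcases Set.eq_empty_or_nonempty (Holes V) with hemp | hne'
      · rw [hemp, Set.ncard_empty] at hncard
        omega
      · exact hne'
    have hcard : HF.toFinset.card = h := by
      rw [← hncard, Set.ncard_eq_toFinset_card _ HF]
    set F := HF.toFinset with hFdef
    let e : ↥F ≃ Fin F.card := F.equivFin
    set G : Fin h → (triGrid.induce Vᶜ).ConnectedComponent :=
      fun j => (e.symm (Fin.cast hcard.symm j)).1 with hG
    have hGmem : ∀ j, G j ∈ Holes V := by
      intro j
      have := (e.symm (Fin.cast hcard.symm j)).2
      rwa [HF.mem_toFinset] at this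
    have hGsurj : ∀ H, H ∈ Holes V → ∃ j : Fin h, G j = H := by
      intro H hH
      refine ⟨Fin.cast hcard (e ⟨H, HF.mem_toFinset.mpr hH⟩), ?_⟩
      have hc : Fin.cast hcard.symm (Fin.cast hcard (e ⟨H, HF.mem_toFinset.mpr hH⟩)) =
          e ⟨H, HF.mem_toFinset.mpr hH⟩ := by
        apply Fin.ext
        simp
      rw [hG]
      simp only [hc, Equiv.symm_apply_apply]
    refine ⟨2 * h, by omega, ?_⟩
    obtain ⟨Reg, hReg⟩ : ∃ Reg : Fin (2 * h) → Set (ℤ × ℤ), ∀ i : Fin (2 * h),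
        Reg i = if hi : (i : ℕ) < h then R1 V (G ⟨i, hi⟩)
          else R2 V (G ⟨(i : ℕ) - h, by have := i.isLt; omega⟩) :=
      ⟨_, fun i => rfl⟩
    have hsub : ∀ i, Reg i ⊆ V := by
      intro i
      rw [hReg i]
      by_cases hi : (i : ℕ) < h
      · rw [dif_pos hi]
        exact R1_subV hfin
      · rw [dif_neg hi]
        exact R2_subV hfin
    refine ⟨Reg, hsub, ?_, ?_⟩
    · apply Set.Subset.antisymm
      · exact Set.iUnion_subset hsub
      · intro v hvV
        by_cases hvU : v ∈ U V
        · by_cases hvB : v ∈ Bad V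
          · obtain ⟨H, hH, hsU, hch⟩ := hvB
            obtain ⟨j, hj⟩ := hGsurj H hH
            refine Set.mem_iUnion.mpr ⟨⟨h + (j : ℕ), by omega⟩, ?_⟩
            have hnlt : ¬ (((⟨h + (j : ℕ), by omega⟩ : Fin (2 * h)) : ℕ) < h) := by
              simp only
              omega
            rw [hReg, dif_neg hnlt]
            have heq : (⟨((⟨h + (j : ℕ), by omega⟩ : Fin (2 * h)) : ℕ) - h,
                by have : h + (j : ℕ) < 2 * h := by omega
                   simp only
                   omega⟩ : Fin h) = j := by
              apply Fin.ext
              simp only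
              omega
            rw [heq, hj, R2, if_pos hsU]
            exact hch
          · have hrepp := repp_mem hfin hvU
            obtain ⟨H₁, hH₁⟩ := hne'
            have hex : ∃ H', H' ∈ Holes V ∧ ∃ u z, Chain (U V) (repp V v) u ∧
                triGrid.Adj u z ∧ z ∈ seg V H' :=
              exists_pick_aux hfin hconn (Wcl_sub hrepp) hH₁
            obtain ⟨H', hH', hpk', _⟩ := pickP_spec hex
            obtain ⟨j, hj⟩ := hGsurj H' hH'
            refine Set.mem_iUnion.mpr ⟨⟨(j : ℕ), by omega⟩, ?_⟩
            have hlt : ((⟨(j : ℕ), by omega⟩ : Fin (2 * h)) : ℕ) < h := j.isLt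
            rw [hReg, dif_pos hlt]
            have heq : (⟨((⟨(j : ℕ), by omega⟩ : Fin (2 * h)) : ℕ), hlt⟩ : Fin h) = j :=
              Fin.ext rfl
            rw [heq, hj]
            exact Or.inr ⟨hvU, hvB, hpk'⟩
        · obtain ⟨H, hH, hseg⟩ := mem_segU_of hfin hvV hvU
          obtain ⟨j, hj⟩ := hGsurj H hH
          refine Set.mem_iUnion.mpr ⟨⟨(j : ℕ), by omega⟩, ?_⟩
          have hlt : ((⟨(j : ℕ), by omega⟩ : Fin (2 * h)) : ℕ) < h := j.isLt
          rw [hReg, dif_pos hlt]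
          have heq : (⟨((⟨(j : ℕ), by omega⟩ : Fin (2 * h)) : ℕ), hlt⟩ : Fin h) = j :=
            Fin.ext rfl
          rw [heq, hj]
          exact Or.inl hseg
    · intro i
      rw [hReg i]
      by_cases hi : (i : ℕ) < h
      · rw [dif_pos hi]
        exact ⟨R1_conn hfin hconn (hGmem _), R1_holeFree hfin (hGmem _)⟩
      · rw [dif_neg hi]
        exact ⟨R2_conn hfin hconn (hGmem _), R2_holeFree hfin (hGmem _)⟩
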